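/- For i = 1,2 let A_i = {(x,y) ∈ ℝ² : |x| ≤ γ_i/2, |y − m_i x| ≤ δ/2} with 0 < δ ≤ γ₂ ≤ γ₁ and slopes |m_i| ≤ K for a fixed constant K, and let α = |arctan m₁ − arctan m₂|. Then there is a constant C depending only on K such that |A₁ + A₂| ≤ C · γ₁ (δ + γ₂ α), where A₁ + A₂ is the Minkowski sum. -/
import Mathlib


open MeasureTheory Set
open scoped ENNReal Pointwise

/-- Volume of a sheared slab. -/
lemma slab_vol (a b R : ℝ) :
    volume {p : ℝ × ℝ | |p.1| ≤ a ∧ |p.2 - b * p.1| ≤ R}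
      = ENNReal.ofReal (2 * a) * ENNReal.ofReal (2 * R) := by
  have hs : MeasurableSet {p : ℝ × ℝ | |p.1| ≤ a ∧ |p.2 - b * p.1| ≤ R} := by
    have heq : {p : ℝ × ℝ | |p.1| ≤ a ∧ |p.2 - b * p.1| ≤ R}
        = {p : ℝ × ℝ | |p.1| ≤ a} ∩ {p : ℝ × ℝ | |p.2 - b * p.1| ≤ R} := rfl
    rw [heq]
    exact (measurableSet_le measurable_fst.abs measurable_const).inter
      (measurableSet_le ((measurable_snd.sub (measurable_fst.const_mul b)).abs)
        measurable_const)
  rw [Measure.volume_eq_prod, Measure.prod_apply hs]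
  have key : ∀ x : ℝ,
      (volume (Prod.mk x ⁻¹' {p : ℝ × ℝ | |p.1| ≤ a ∧ |p.2 - b * p.1| ≤ R}))
        = (Icc (-a) a).indicator (fun _ => ENNReal.ofReal (2 * R)) x := by
    intro x
    by_cases hx : |x| ≤ a
    · have hmem : x ∈ Icc (-a) a := by
        rcases abs_le.mp hx with ⟨h1, h2⟩; exact ⟨h1, h2⟩
      rw [indicator_of_mem hmem]
      have hset : Prod.mk x ⁻¹' {p : ℝ × ℝ | |p.1| ≤ a ∧ |p.2 - b * p.1| ≤ R}
          = Icc (b * x - R) (b * x + R) := by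
        ext y
        simp only [mem_preimage, mem_setOf_eq, mem_Icc, abs_le]
        constructor
        · rintro ⟨-, h1, h2⟩; exact ⟨by linarith, by linarith⟩
        · rintro ⟨h1, h2⟩
          exact ⟨abs_le.mp hx, by linarith, by linarith⟩
      rw [hset, Real.volume_Icc]
      congr 1; ring
    · have hnotmem : x ∉ Icc (-a) a := by
        intro h; exact hx (abs_le.mpr ⟨h.1, h.2⟩)
      rw [indicator_of_notMem hnotmem]
      have hset : Prod.mk x ⁻¹' {p : ℝ × ℝ | |p.1| ≤ a ∧ |p.2 - b * p.1| ≤ R}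
          = (∅ : Set ℝ) := by
        ext y; simp only [mem_preimage, mem_setOf_eq, mem_empty_iff_false, iff_false]
        rintro ⟨h1, _⟩; exact hx h1
      rw [hset, measure_empty]
  simp only [key]
  rw [lintegral_indicator measurableSet_Icc, setLIntegral_const, Real.volume_Icc]
  rw [mul_comm]
  congr 1; ring

/-- Mean value inequality for arctan. -/
lemma arctan_lower (K m₁ m₂ : ℝ) (h1 : |m₁| ≤ K) (h2 : |m₂| ≤ K) :
    |m₁ - m₂| ≤ (1 + K ^ 2) * |Real.arctan m₁ - Real.arctan m₂| := by
  have main : ∀ x y : ℝ, |x| ≤ K → |y| ≤ K → x < y →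
      y - x ≤ (1 + K ^ 2) * (Real.arctan y - Real.arctan x) := by
    intro x y hx hy hxy
    obtain ⟨c, hc, hc'⟩ := exists_hasDerivAt_eq_slope Real.arctan
      (fun t => 1 / (1 + t ^ 2)) hxy Real.continuous_arctan.continuousOn
      (fun t _ => Real.hasDerivAt_arctan t)
    have hxK := abs_le.mp hx
    have hyK := abs_le.mp hy
    have hcK : c ^ 2 ≤ K ^ 2 := by nlinarith [hc.1, hc.2]
    have hpos : (0 : ℝ) < 1 + c ^ 2 := by positivity
    have hd : (Real.arctan y - Real.arctan x) * (1 + c ^ 2) = y - x := by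
      rw [div_eq_div_iff hpos.ne' (by linarith : (0:ℝ) < y - x).ne'] at hc'
      linarith [hc']
    have hdpos : 0 ≤ Real.arctan y - Real.arctan x := by nlinarith
    nlinarith [mul_nonneg hdpos (sub_nonneg.mpr hcK)]
  rcases lt_trichotomy m₁ m₂ with h | h | h
  · have ha : Real.arctan m₁ < Real.arctan m₂ := Real.arctan_strictMono h
    have := main m₁ m₂ h1 h2 h
    rw [abs_sub_comm m₁ m₂, abs_of_pos (by linarith : 0 < m₂ - m₁),
      abs_sub_comm, abs_of_pos (by linarith : 0 < Real.arctan m₂ - Real.arctan m₁)]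
    linarith
  · simp [h]
  · have ha : Real.arctan m₂ < Real.arctan m₁ := Real.arctan_strictMono h
    have := main m₂ m₁ h2 h1 h
    rw [abs_of_pos (by linarith : 0 < m₁ - m₂),
      abs_of_pos (by linarith : 0 < Real.arctan m₁ - Real.arctan m₂)]
    linarith

/-- Area bound for the Minkowski sum of two thin parallelograms:
`|A₁ + A₂| ≤ C γ₁ (δ + γ₂ α)`, where `α` is the angle between them. -/
theorem statement13 (K : ℝ) (hK : 0 < K) :
    ∃ C > 0, ∀ δ γ₁ γ₂ m₁ m₂ : ℝ, 0 < δ → δ ≤ γ₂ → γ₂ ≤ γ₁ →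
      |m₁| ≤ K → |m₂| ≤ K →
      volume ({p : ℝ × ℝ | |p.1| ≤ γ₁ / 2 ∧ |p.2 - m₁ * p.1| ≤ δ / 2} +
              {p : ℝ × ℝ | |p.1| ≤ γ₂ / 2 ∧ |p.2 - m₂ * p.1| ≤ δ / 2}) ≤
        ENNReal.ofReal
          (C * γ₁ * (δ + γ₂ * |Real.arctan m₁ - Real.arctan m₂|)) := by
  refine ⟨4 * (1 + K ^ 2), by positivity, ?_⟩
  intro δ γ₁ γ₂ m₁ m₂ hδ hδγ₂ hγ hm₁ hm₂
  have hγ₂ : 0 < γ₂ := lt_of_lt_of_le hδ hδγ₂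
  have hγ₁ : 0 < γ₁ := lt_of_lt_of_le hγ₂ hγ
  set R := δ + |m₁ - m₂| * γ₂ / 2 with hRdef
  have hRpos : 0 < R := by
    have := abs_nonneg (m₁ - m₂); positivity
  have hsub : {p : ℝ × ℝ | |p.1| ≤ γ₁ / 2 ∧ |p.2 - m₁ * p.1| ≤ δ / 2} +
      {p : ℝ × ℝ | |p.1| ≤ γ₂ / 2 ∧ |p.2 - m₂ * p.1| ≤ δ / 2} ⊆
      {p : ℝ × ℝ | |p.1| ≤ γ₁ ∧ |p.2 - m₁ * p.1| ≤ R} := by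
    rintro p hp
    rw [Set.mem_add] at hp
    obtain ⟨u, hu, v, hv, huv⟩ := hp
    have hp1 : p.1 = u.1 + v.1 := by rw [← huv]; rfl
    have hp2 : p.2 = u.2 + v.2 := by rw [← huv]; rfl
    constructor
    · rw [hp1]
      calc |u.1 + v.1| ≤ |u.1| + |v.1| := abs_add_le _ _
        _ ≤ γ₁ / 2 + γ₂ / 2 := add_le_add hu.1 hv.1
        _ ≤ γ₁ := by linarith
    · have heq : p.2 - m₁ * p.1
          = (u.2 - m₁ * u.1) + (v.2 - m₂ * v.1) + (m₂ - m₁) * v.1 := by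
        rw [hp1, hp2]; ring
      rw [heq]
      have h3 : |(m₂ - m₁) * v.1| ≤ |m₁ - m₂| * (γ₂ / 2) := by
        rw [abs_mul, abs_sub_comm m₂ m₁]
        exact mul_le_mul_of_nonneg_left hv.1 (abs_nonneg _)
      calc |(u.2 - m₁ * u.1) + (v.2 - m₂ * v.1) + (m₂ - m₁) * v.1|
          ≤ |(u.2 - m₁ * u.1) + (v.2 - m₂ * v.1)| + |(m₂ - m₁) * v.1| := abs_add_le _ _
        _ ≤ |u.2 - m₁ * u.1| + |v.2 - m₂ * v.1| + |(m₂ - m₁) * v.1| := by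
            linarith [abs_add_le (u.2 - m₁ * u.1) (v.2 - m₂ * v.1)]
        _ ≤ δ / 2 + δ / 2 + |m₁ - m₂| * (γ₂ / 2) := by
            exact add_le_add (add_le_add hu.2 hv.2) h3
        _ = R := by rw [hRdef]; ring
  calc volume ({p : ℝ × ℝ | |p.1| ≤ γ₁ / 2 ∧ |p.2 - m₁ * p.1| ≤ δ / 2} +
        {p : ℝ × ℝ | |p.1| ≤ γ₂ / 2 ∧ |p.2 - m₂ * p.1| ≤ δ / 2})
      ≤ volume {p : ℝ × ℝ | |p.1| ≤ γ₁ ∧ |p.2 - m₁ * p.1| ≤ R} := measure_mono hsub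
    _ = ENNReal.ofReal (2 * γ₁) * ENNReal.ofReal (2 * R) := slab_vol γ₁ m₁ R
    _ = ENNReal.ofReal ((2 * γ₁) * (2 * R)) :=
        (ENNReal.ofReal_mul (by positivity)).symm
    _ ≤ ENNReal.ofReal
        (4 * (1 + K ^ 2) * γ₁ * (δ + γ₂ * |Real.arctan m₁ - Real.arctan m₂|)) := by
        apply ENNReal.ofReal_le_ofReal
        have hd := arctan_lower K m₁ m₂ hm₁ hm₂
        set α := |Real.arctan m₁ - Real.arctan m₂| with hα
        have hα0 : 0 ≤ α := abs_nonneg _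
        have h0 : 0 ≤ |m₁ - m₂| := abs_nonneg _
        rw [hRdef]
        nlinarith [mul_le_mul_of_nonneg_left hd (mul_nonneg hγ₁.le hγ₂.le),
          mul_nonneg (mul_nonneg hγ₁.le hδ.le) (sq_nonneg K),
          mul_nonneg (mul_nonneg (mul_nonneg hγ₁.le hγ₂.le) hα0) (sq_nonneg K),
          mul_nonneg (mul_nonneg hγ₁.le hγ₂.le) hα0]
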